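/- For all real numbers t ≥ s ≥ 0 one has 2ν(t − s) ≤ μ_n(t²)·t − μ_n(s²)·s ≤ (σn + 2ν)(t − s). (Lemma 4.2(a) of the paper, inequality (eq:mukey).) -/

import Mathlib

set_option maxHeartbeats 1000000 in
/-- Lemma 4.2(a), inequality (eq:mukey): for all real numbers `t ≥ s ≥ 0` one has
`2ν(t − s) ≤ μ_n(t²)·t − μ_n(s²)·s ≤ (σn + 2ν)(t − s)`, where
`μ_n(t) = σ/√(t + n⁻²) + 2ν`. -/
theorem stmt_0 (σ ν : ℝ) (hσ : 0 < σ) (hν : 0 < ν) (n : ℕ) (hn : 0 < n)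
    (μ : ℝ → ℝ)
    (hμ : ∀ t, μ t = σ / Real.sqrt (t + ((n : ℝ))⁻¹ ^ 2) + 2 * ν)
    (s t : ℝ) (hs : 0 ≤ s) (hst : s ≤ t) :
    2 * ν * (t - s) ≤ μ (t ^ 2) * t - μ (s ^ 2) * s ∧
      μ (t ^ 2) * t - μ (s ^ 2) * s ≤ (σ * n + 2 * ν) * (t - s) := by
  have ht : 0 ≤ t := hs.trans hst
  set a : ℝ := ((n : ℝ))⁻¹ with ha
  have hnpos : (0:ℝ) < n := by exact_mod_cast hn
  have hapos : 0 < a := by positivity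
  set A : ℝ := Real.sqrt (t ^ 2 + a ^ 2) with hA
  set B : ℝ := Real.sqrt (s ^ 2 + a ^ 2) with hB
  have hApos : 0 < A := Real.sqrt_pos.2 (by positivity)
  have hBpos : 0 < B := Real.sqrt_pos.2 (by positivity)
  have hAsq : A ^ 2 = t ^ 2 + a ^ 2 := Real.sq_sqrt (by positivity)
  have hBsq : B ^ 2 = s ^ 2 + a ^ 2 := Real.sq_sqrt (by positivity)
  have hBA : B ≤ A := Real.sqrt_le_sqrt (by nlinarith)
  have haA : a ≤ A := by
    have := Real.sqrt_le_sqrt (show a ^ 2 ≤ t ^ 2 + a ^ 2 by nlinarith)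
    rwa [Real.sqrt_sq hapos.le] at this
  have hnA : 1 ≤ (n : ℝ) * A := by
    have h1 : a * (n : ℝ) = 1 := by rw [ha]; exact inv_mul_cancel₀ hnpos.ne'
    nlinarith
  -- key inequality (monotonicity): s * A ≤ t * B
  have hkey : s * A ≤ t * B := by
    have hsq : (s * A) ^ 2 ≤ (t * B) ^ 2 := by
      rw [mul_pow, mul_pow, hAsq, hBsq]
      nlinarith [mul_le_mul_of_nonneg_right (mul_le_mul hst hst hs ht) (sq_nonneg a)]
    nlinarith [mul_nonneg hs hApos.le, mul_nonneg ht hBpos.le]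
  -- Lipschitz-type inequality: t * B - s * A ≤ n * (t - s) * (A * B)
  have hlip : t * B - s * A ≤ (n : ℝ) * (t - s) * (A * B) := by
    have h3 : s * B ≤ s * A := mul_le_mul_of_nonneg_left hBA hs
    have h4 : (t - s) * B ≤ (t - s) * B * ((n : ℝ) * A) := by
      nlinarith [mul_nonneg (sub_nonneg.2 hst) hBpos.le]
    nlinarith
  have h1 : σ * s / B ≤ σ * t / A := by
    rw [div_le_div_iff₀ hBpos hApos]
    nlinarith
  have h2 : σ * t / A - σ * s / B ≤ σ * n * (t - s) := by
    rw [div_sub_div _ _ hApos.ne' hBpos.ne', div_le_iff₀ (by positivity)]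
    linarith [mul_le_mul_of_nonneg_left hlip hσ.le]
  have hexp : (σ / A + 2 * ν) * t - (σ / B + 2 * ν) * s
      = (σ * t / A - σ * s / B) + 2 * ν * (t - s) := by
    ring
  rw [hμ, hμ, ← hA, ← hB]
  constructor
  · rw [hexp]; linarith
  · rw [hexp]; nlinarith [h2]
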